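/- Define for λ > −μ̃ the operators W_λ(η, g) = (0, h) with h(a) = e^{−λa} Π(0,a) η + ∫_0^a e^{−λ(a−s)} Π(s,a) g(s) ds. Then for all ν ≠ λ with ν, λ > −μ̃, the resolvent identity W_ν W_λ = (W_λ − W_ν)/(ν − λ) holds, i.e. the family {W_λ} is a pseudoresolvent. -/

import Mathlib

open MeasureTheory

/-- If `Pi` is strongly continuous, then `t ↦ Pi t a (g t)` is continuous for continuous `g`. -/
lemma cont_apply_aux {X : Type*} [NormedAddCommGroup X] [NormedSpace ℝ X] [CompleteSpace X]
    (Pi : ℝ → ℝ → (X →L[ℝ] X))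
    (hPicont : ∀ v : X, Continuous fun p : ℝ × ℝ => Pi p.1 p.2 v)
    (g : ℝ → X) (hg : Continuous g) (a : ℝ) :
    Continuous fun t => Pi t a (g t) := by
  rw [continuous_iff_continuousAt]
  intro t₀
  -- uniform bound on a compact neighborhood, via Banach–Steinhaus
  obtain ⟨C, hC⟩ : ∃ C, ∀ t : Set.Icc (t₀ - 1) (t₀ + 1), ‖Pi (t : ℝ) a‖ ≤ C := by
    apply banach_steinhaus
    intro x
    obtain ⟨C, hC⟩ := IsCompact.exists_bound_of_continuousOn
      (isCompact_Icc (a := t₀ - 1) (b := t₀ + 1))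
      (((hPicont x).comp (continuous_id.prodMk continuous_const)).continuousOn)
    exact ⟨C, fun t => hC t t.2⟩
  have h2 : Continuous fun t => Pi t a (g t₀) :=
    (hPicont (g t₀)).comp (continuous_id.prodMk continuous_const)
  have h1 : Filter.Tendsto (fun t => Pi t a (g t - g t₀)) (nhds t₀) (nhds 0) := by
    refine squeeze_zero_norm' (a := fun t => C * ‖g t - g t₀‖) ?_ ?_
    · have hmem : Set.Icc (t₀ - 1) (t₀ + 1) ∈ nhds t₀ := by
        apply Icc_mem_nhds <;> linarith
      filter_upwards [hmem] with t ht
      calc ‖Pi t a (g t - g t₀)‖ ≤ ‖Pi t a‖ * ‖g t - g t₀‖ := (Pi t a).le_opNorm _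
        _ ≤ C * ‖g t - g t₀‖ :=
            mul_le_mul_of_nonneg_right (hC ⟨t, ht⟩) (norm_nonneg _)
    · have : Filter.Tendsto (fun t => ‖g t - g t₀‖) (nhds t₀) (nhds ‖g t₀ - g t₀‖) :=
        ((hg.sub continuous_const).norm).continuousAt
      simpa using this.const_mul C
  have : Filter.Tendsto (fun t => Pi t a (g t - g t₀) + Pi t a (g t₀)) (nhds t₀)
      (nhds (0 + Pi t₀ a (g t₀))) := h1.add h2.continuousAt
  simpa [ContinuousAt, map_sub] using this

set_option maxHeartbeats 1000000 in
/-- The family `W_λ(η,g) = (0,h)` with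
`h(a) = e^{-λa} Π(0,a)η + ∫_0^a e^{-λ(a-s)} Π(s,a) g(s) ds` satisfies the resolvent
identity `W_ν W_λ = (W_λ - W_ν)/(ν - λ)` (stated on the second component). -/
theorem stmt_2 {X : Type*} [NormedAddCommGroup X] [NormedSpace ℝ X] [CompleteSpace X]
    (μt : ℝ) (hμt : 0 < μt)
    (Pi : ℝ → ℝ → (X →L[ℝ] X))
    (hid : ∀ a : ℝ, Pi a a = ContinuousLinearMap.id ℝ X)
    (hcomp : ∀ τ s a : ℝ, τ ≤ s → s ≤ a → Pi τ a = (Pi s a).comp (Pi τ s))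
    (hPicont : ∀ v : X, Continuous fun p : ℝ × ℝ => Pi p.1 p.2 v)
    (η : X) (g : ℝ → X) (hg : Continuous g)
    (lam ν : ℝ) (hlam : -μt < lam) (hν : -μt < ν) (hne : ν ≠ lam) :
    ∀ a : ℝ, 0 ≤ a →
      (Real.exp (-(ν * a)) • Pi 0 a 0 +
        ∫ s in (0:ℝ)..a, Real.exp (-(ν * (a - s))) •
          Pi s a (Real.exp (-(lam * s)) • Pi 0 s η +
            ∫ t in (0:ℝ)..s, Real.exp (-(lam * (s - t))) • Pi t s (g t))) =
      (ν - lam)⁻¹ •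
        ((Real.exp (-(lam * a)) • Pi 0 a η +
            ∫ s in (0:ℝ)..a, Real.exp (-(lam * (a - s))) • Pi s a (g s)) -
          (Real.exp (-(ν * a)) • Pi 0 a η +
            ∫ s in (0:ℝ)..a, Real.exp (-(ν * (a - s))) • Pi s a (g s))) := by
  intro a ha
  have hνlam : ν - lam ≠ 0 := sub_ne_zero.mpr hne
  -- notation
  have hu : Continuous fun t => Pi t a (g t) := cont_apply_aux Pi hPicont g hg a
  set u : ℝ → X := fun t => Pi t a (g t) with hu_def
  set w : ℝ → X := fun t => Real.exp (lam * t) • u t with hw_def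
  have hw : Continuous w := (Real.continuous_exp.comp (by fun_prop)).smul hu
  set P : ℝ → X := fun s => ∫ t in (0:ℝ)..s, w t with hP_def
  have hPcont : Continuous P :=
    intervalIntegral.continuous_primitive (fun a b => hw.intervalIntegrable a b) 0
  have hP0 : P 0 = 0 := intervalIntegral.integral_same
  have hPderiv : ∀ s : ℝ, HasDerivAt P (w s) s := fun s =>
    intervalIntegral.integral_hasDerivAt_right (hw.intervalIntegrable 0 s)
      (hw.stronglyMeasurableAtFilter _ _) hw.continuousAt
  set c : ℝ → ℝ := fun s => Real.exp ((ν - lam) * s - ν * a) with hc_def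
  have hccont : Continuous c := Real.continuous_exp.comp (by fun_prop)
  -- Step 1: rewrite the integrand of the LHS
  have key : ∀ s ∈ Set.uIcc (0:ℝ) a,
      Real.exp (-(ν * (a - s))) •
        Pi s a (Real.exp (-(lam * s)) • Pi 0 s η +
          ∫ t in (0:ℝ)..s, Real.exp (-(lam * (s - t))) • Pi t s (g t)) =
      c s • Pi 0 a η + c s • P s := by
    intro s hs
    rw [Set.uIcc_of_le ha] at hs
    obtain ⟨hs0, hsa⟩ := hs
    have husc : Continuous fun t => Pi t s (g t) := cont_apply_aux Pi hPicont g hg s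
    have hint : IntervalIntegrable (fun t => Real.exp (-(lam * (s - t))) • Pi t s (g t))
        volume 0 s :=
      ((Real.continuous_exp.comp (by fun_prop)).smul husc).intervalIntegrable 0 s
    rw [map_add, ContinuousLinearMap.map_smul, ← ContinuousLinearMap.intervalIntegral_comp_comm _ hint]
    have e1 : Pi s a (Pi 0 s η) = Pi 0 a η := by
      rw [hcomp 0 s a hs0 hsa]; rfl
    have e2 : (∫ t in (0:ℝ)..s, Pi s a (Real.exp (-(lam * (s - t))) • Pi t s (g t)))
        = ∫ t in (0:ℝ)..s, Real.exp (-(lam * (s - t))) • u t := by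
      apply intervalIntegral.integral_congr
      intro t ht
      rw [Set.uIcc_of_le hs0] at ht
      show Pi s a (Real.exp (-(lam * (s - t))) • Pi t s (g t)) = _
      rw [ContinuousLinearMap.map_smul]
      show _ = Real.exp (-(lam * (s - t))) • (Pi t a (g t))
      congr 1
      rw [hcomp t s a ht.2 hsa]; rfl
    rw [e1, e2, smul_add, smul_smul]
    congr 1
    · congr 1
      rw [hc_def, ← Real.exp_add]
      ring_nf
    · rw [hP_def, ← intervalIntegral.integral_smul, ← intervalIntegral.integral_smul]
      apply intervalIntegral.integral_congr
      intro t ht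
      simp only [hw_def, smul_smul]
      congr 1
      rw [hc_def, ← Real.exp_add, ← Real.exp_add]
      ring_nf
  rw [map_zero, smul_zero, zero_add, intervalIntegral.integral_congr key]
  -- split the integral
  have hcP : Continuous fun s => c s • P s := hccont.smul hPcont
  rw [intervalIntegral.integral_add (f := fun s => c s • Pi 0 a η)
    ((hccont.smul continuous_const).intervalIntegrable 0 a) (hcP.intervalIntegrable 0 a),
    intervalIntegral.integral_smul_const]
  -- scalar integral
  have hQderiv : ∀ s : ℝ, HasDerivAt (fun s => (ν - lam)⁻¹ * c s) (c s) s := by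
    intro s
    have h1 : HasDerivAt (fun s : ℝ => (ν - lam) * s - ν * a) (ν - lam) s := by
      simpa using ((hasDerivAt_id s).const_mul (ν - lam)).sub_const (ν * a)
    have h2 := (h1.exp).const_mul ((ν - lam)⁻¹)
    refine h2.congr_deriv ?_
    rw [hc_def]
    field_simp
  have hSc : (∫ s in (0:ℝ)..a, c s)
      = (ν - lam)⁻¹ * (Real.exp (-(lam * a)) - Real.exp (-(ν * a))) := by
    have h := intervalIntegral.integral_eq_sub_of_hasDerivAt
      (f := fun s => (ν - lam)⁻¹ * c s) (f' := c) (a := 0) (b := a)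
      (fun s _ => hQderiv s) (hccont.intervalIntegrable 0 a)
    rw [h, hc_def]
    ring_nf
  -- integration by parts
  have hca : c a = Real.exp (-(lam * a)) := by rw [hc_def]; ring_nf
  have hibp : (∫ s in (0:ℝ)..a, (((ν - lam)⁻¹ * c s) • w s + c s • P s))
      = ((ν - lam)⁻¹ * Real.exp (-(lam * a))) • P a := by
    have h := intervalIntegral.integral_eq_sub_of_hasDerivAt
      (f := fun s => ((ν - lam)⁻¹ * c s) • P s)
      (f' := fun s => ((ν - lam)⁻¹ * c s) • w s + c s • P s)
      (a := 0) (b := a)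
      (fun s _ => (hQderiv s).smul (hPderiv s))
      (((((continuous_const.mul hccont)).smul hw).add hcP).intervalIntegrable 0 a)
    rw [h]
    simp only [hP0, smul_zero, sub_zero, hca]
  have hsplit2 : (∫ s in (0:ℝ)..a, (((ν - lam)⁻¹ * c s) • w s + c s • P s))
      = (ν - lam)⁻¹ • (∫ s in (0:ℝ)..a, c s • w s)
        + (∫ s in (0:ℝ)..a, c s • P s) := by
    rw [intervalIntegral.integral_add (f := fun s => ((ν - lam)⁻¹ * c s) • w s)
      (((continuous_const.mul hccont).smul hw).intervalIntegrable 0 a)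
      (hcP.intervalIntegrable 0 a)]
    congr 1
    rw [← intervalIntegral.integral_smul]
    apply intervalIntegral.integral_congr
    intro s _
    simp only [mul_smul]
  -- identify the remaining integrals with those on the RHS
  have hIν : (∫ s in (0:ℝ)..a, c s • w s)
      = ∫ s in (0:ℝ)..a, Real.exp (-(ν * (a - s))) • Pi s a (g s) := by
    apply intervalIntegral.integral_congr
    intro s _
    show c s • (Real.exp (lam * s) • u s) = Real.exp (-(ν * (a - s))) • u s
    rw [smul_smul]
    congr 1
    rw [hc_def, ← Real.exp_add]
    ring_nf
  have hIlam : (∫ s in (0:ℝ)..a, Real.exp (-(lam * (a - s))) • Pi s a (g s))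
      = Real.exp (-(lam * a)) • P a := by
    rw [hP_def, ← intervalIntegral.integral_smul]
    apply intervalIntegral.integral_congr
    intro s _
    show Real.exp (-(lam * (a - s))) • u s = Real.exp (-(lam * a)) • (Real.exp (lam * s) • u s)
    rw [smul_smul, ← Real.exp_add]
    congr 2
    ring
  have hcPval : (∫ s in (0:ℝ)..a, c s • P s)
      = ((ν - lam)⁻¹ * Real.exp (-(lam * a))) • P a - (ν - lam)⁻¹ •
          (∫ s in (0:ℝ)..a, Real.exp (-(ν * (a - s))) • Pi s a (g s)) := by
    rw [← hIν]
    have h := hsplit2.symm.trans hibp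
    rw [add_comm] at h
    exact eq_sub_of_add_eq h
  rw [hSc, hcPval, hIlam]
  module
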